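/- For every real number α > 1 there exists a finite constant M(α) such that the supremum over all even L ∈ ℕ of the expectation E_W[(r^L · τ_1^{(L)})^α] is at most M(α); in particular this supremum is finite. -/

import Mathlib

open MeasureTheory ProbabilityTheory Set
open scoped ENNReal

/-- The alternating pattern `(+, −, +, −, …)`: `0` codes `+`, `1` codes `−`, `2` codes `0`. -/
def altPat (j : ℕ) : Fin 3 := if j % 2 = 0 then 0 else 1

/-- The first regeneration time `τ₁^{(L)}`:
the first `n > L` such that `(ε_{n−L}, …, ε_{n−1})` equals the alternating word of length `L`. -/
noncomputable def tau1 (L : ℕ) (ε : ℕ → Fin 3) : ℕ :=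
  sInf {n : ℕ | L < n ∧ ∀ j < L, ε (n - L + j) = altPat j}

def patF (a n : ℕ) : Fin 3 := if n < a then 2 else altPat (n - a)

def Dset (L k i : ℕ) : Set (ℕ → Fin 3) :=
  ⋂ n ∈ Finset.Ico (2*L*k + 2*i - 1) (2*L*k + 2*i + L),
    (fun ε : ℕ → Fin 3 => ε n) ⁻¹' {patF (2*L*k + 2*i) n}

def succSet (L k : ℕ) : Set (ℕ → Fin 3) := ⋃ i ∈ Finset.Icc 1 (L/2), Dset L k i

def failSet (L k : ℕ) : Set (ℕ → Fin 3) := (succSet L k)ᶜ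

def IkSet (L k : ℕ) : Set (ℕ → Fin 3) := ⋂ j ∈ Finset.range k, failSet L j

lemma Dset_mem {L k i : ℕ} {ε : ℕ → Fin 3} :
    ε ∈ Dset L k i ↔ ∀ n ∈ Finset.Ico (2*L*k + 2*i - 1) (2*L*k + 2*i + L),
      ε n = patF (2*L*k + 2*i) n := by
  simp [Dset]

lemma Dset_measurable (L k i : ℕ) : MeasurableSet (Dset L k i) :=
  (Finset.Ico _ _).measurableSet_biInter (fun n _ =>
    measurable_pi_apply n (measurableSet_singleton _))

lemma succSet_measurable (L k : ℕ) : MeasurableSet (succSet L k) :=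
  (Finset.Icc _ _).measurableSet_biUnion (fun i _ => Dset_measurable L k i)

lemma failSet_measurable (L k : ℕ) : MeasurableSet (failSet L k) :=
  (succSet_measurable L k).compl

lemma IkSet_measurable (L k : ℕ) : MeasurableSet (IkSet L k) :=
  (Finset.range _).measurableSet_biInter (fun j _ => failSet_measurable L j)

lemma Dset_disjoint {L : ℕ} (hL : 2 * (L/2) = L) (k : ℕ) {i i' : ℕ}
    (hi : 1 ≤ i) (hi' : i' ≤ L/2) (hlt : i < i') :
    Disjoint (Dset L k i) (Dset L k i') := by
  rw [Set.disjoint_left]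
  intro ε hε hε'
  have h1 := Dset_mem.1 hε (2*L*k + 2*i' - 1) (by simp [Finset.mem_Ico]; omega)
  have h2 := Dset_mem.1 hε' (2*L*k + 2*i' - 1) (by simp [Finset.mem_Ico]; omega)
  rw [h1] at h2
  have hnlt : ¬ (2*L*k + 2*i' - 1 < 2*L*k + 2*i) := by omega
  have hlt2 : 2*L*k + 2*i' - 1 < 2*L*k + 2*i' := by omega
  rw [patF, if_neg hnlt] at h2
  rw [patF, if_pos hlt2] at h2
  have hsub : (2*L*k + 2*i' - 1) - (2*L*k + 2*i) = 2*(i' - i) - 1 := by omega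
  rw [hsub, altPat, if_neg (by omega)] at h2
  exact absurd h2 (by decide)

lemma tau1_le_of_succ {L : ℕ} (hL : 2 * (L/2) = L) (hLpos : 0 < L) {k : ℕ}
    {ε : ℕ → Fin 3} (hε : ε ∈ succSet L k) : tau1 L ε ≤ 2*L*(k+1) := by
  simp only [succSet, Set.mem_iUnion, Finset.mem_Icc] at hε
  obtain ⟨i, ⟨hi1, hi2⟩, hεD⟩ := hε
  have hmem := Dset_mem.1 hεD
  have h1 : tau1 L ε ≤ 2*L*k + 2*i + L := by
    apply Nat.sInf_le
    constructor
    · omega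
    · intro j hj
      have heq : 2*L*k + 2*i + L - L + j = 2*L*k + 2*i + j := by omega
      rw [heq, hmem (2*L*k + 2*i + j) (by simp [Finset.mem_Ico]; omega),
        patF, if_neg (by omega)]
      congr 1
      omega
  have hexp : 2*L*(k+1) = 2*L*k + L + L := by ring
  omega

/-- Independence of two events depending on disjoint finite coordinate sets. -/
lemma aux_indep_of_dependsOn
    {W : Measure (ℕ → Fin 3)}
    (hiid : iIndepFun (fun i (ε : ℕ → Fin 3) => ε i) W)
    (S T : Finset ℕ) (hST : Disjoint S T) (C D : Set (ℕ → Fin 3))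
    (hC : ∀ ε ε' : ℕ → Fin 3, (∀ n ∈ S, ε n = ε' n) → (ε ∈ C ↔ ε' ∈ C))
    (hD : ∀ ε ε' : ℕ → Fin 3, (∀ n ∈ T, ε n = ε' n) → (ε ∈ D ↔ ε' ∈ D)) :
    W (C ∩ D) = W C * W D := by
  classical
  have hInd := hiid.indepFun_finset S T hST (fun i => measurable_pi_apply i)
  set eS : ({x // x ∈ S} → Fin 3) → (ℕ → Fin 3) :=
    fun y n => if h : n ∈ S then y ⟨n, h⟩ else 0 with heS
  set eT : ({x // x ∈ T} → Fin 3) → (ℕ → Fin 3) :=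
    fun y n => if h : n ∈ T then y ⟨n, h⟩ else 0 with heT
  have hCeq : (fun (ε : ℕ → Fin 3) (i : {x // x ∈ S}) => ε i) ⁻¹' (eS ⁻¹' C) = C := by
    ext ε
    simp only [mem_preimage]
    exact hC _ _ (fun n hn => by simp [heS, hn])
  have hDeq : (fun (ε : ℕ → Fin 3) (i : {x // x ∈ T}) => ε i) ⁻¹' (eT ⁻¹' D) = D := by
    ext ε
    simp only [mem_preimage]
    exact hD _ _ (fun n hn => by simp [heT, hn])
  have := hInd.measure_inter_preimage_eq_mul (eS ⁻¹' C) (eT ⁻¹' D)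
    MeasurableSet.of_discrete MeasurableSet.of_discrete
  rwa [hCeq, hDeq] at this

section Measures

variable {p r : ℝ} {w : Measure (Fin 3)} {W : Measure (ℕ → Fin 3)}

lemma w_altPat (hw0 : w {0} = ENNReal.ofReal r) (hw1 : w {1} = ENNReal.ofReal r) (j : ℕ) :
    w {altPat j} = ENNReal.ofReal r := by
  rw [altPat]; split <;> assumption

lemma coord_measure (hmarg : ∀ i : ℕ, W.map (fun ε => ε i) = w) (n : ℕ) (c : Fin 3) :
    W ((fun ε : ℕ → Fin 3 => ε n) ⁻¹' {c}) = w {c} := by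
  rw [← hmarg n, Measure.map_apply (measurable_pi_apply n) (measurableSet_singleton c)]

lemma Dset_measure
    (hiid : iIndepFun (fun i (ε : ℕ → Fin 3) => ε i) W)
    (hmarg : ∀ i : ℕ, W.map (fun ε => ε i) = w)
    (hw0 : w {0} = ENNReal.ofReal r) (hw1 : w {1} = ENNReal.ofReal r)
    (hw2 : w {2} = ENNReal.ofReal p)
    {L k i : ℕ} (hi : 1 ≤ i) :
    W (Dset L k i) = ENNReal.ofReal p * ENNReal.ofReal r ^ L := by
  set a := 2*L*k + 2*i with ha
  have ha2 : 2 ≤ a := by omega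
  rw [Dset]
  rw [hiid.meas_biInter (fun n _ => ⟨{patF a n}, measurableSet_singleton _, rfl⟩)]
  have hsplit : Finset.Ico (a - 1) (a + L) = insert (a-1) (Finset.Ico a (a+L)) := by
    ext n; simp only [Finset.mem_Ico, Finset.mem_insert]; omega
  rw [hsplit, Finset.prod_insert (by simp only [Finset.mem_Ico]; omega)]
  have h2 : W ((fun ε : ℕ → Fin 3 => ε (a-1)) ⁻¹' {patF a (a-1)}) = ENNReal.ofReal p := by
    rw [coord_measure hmarg, patF, if_pos (by omega), hw2]
  have h3 : ∀ n ∈ Finset.Ico a (a+L),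
      W ((fun ε : ℕ → Fin 3 => ε n) ⁻¹' {patF a n}) = ENNReal.ofReal r := by
    intro n hn; simp only [Finset.mem_Ico] at hn
    rw [coord_measure hmarg, patF, if_neg (by omega), w_altPat hw0 hw1]
  rw [h2, Finset.prod_congr rfl h3, Finset.prod_const, Nat.card_Ico,
    show a + L - a = L by omega]

lemma succSet_measure
    (hiid : iIndepFun (fun i (ε : ℕ → Fin 3) => ε i) W)
    (hmarg : ∀ i : ℕ, W.map (fun ε => ε i) = w)
    (hw0 : w {0} = ENNReal.ofReal r) (hw1 : w {1} = ENNReal.ofReal r)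
    (hw2 : w {2} = ENNReal.ofReal p)
    {L : ℕ} (hL : 2 * (L/2) = L) (k : ℕ) :
    W (succSet L k) = (L/2 : ℕ) * (ENNReal.ofReal p * ENNReal.ofReal r ^ L) := by
  rw [succSet, measure_biUnion_finset ?hd (fun i _ => Dset_measurable L k i)]
  case hd =>
    intro i hi i' hi' hne
    simp only [Finset.coe_Icc, Set.mem_Icc] at hi hi'
    rcases lt_or_gt_of_ne hne with h | h
    · exact Dset_disjoint hL k hi.1 hi'.2 h
    · exact (Dset_disjoint hL k hi'.1 hi.2 h).symm
  rw [Finset.sum_congr rfl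
    (fun i hi => Dset_measure hiid hmarg hw0 hw1 hw2 (Finset.mem_Icc.1 hi).1),
    Finset.sum_const, Nat.card_Icc, nsmul_eq_mul]
  norm_num

lemma Dset_dep {L k i : ℕ} (hL : 2 * (L/2) = L) (hi1 : 1 ≤ i) (hi2 : i ≤ L/2)
    {ε ε' : ℕ → Fin 3}
    (h : ∀ n ∈ Finset.Ico (2*L*k) (2*L*k + 2*L), ε n = ε' n) :
    ε ∈ Dset L k i ↔ ε' ∈ Dset L k i := by
  have hcoord : ∀ n ∈ Finset.Ico (2*L*k + 2*i - 1) (2*L*k + 2*i + L), ε n = ε' n := by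
    intro n hn
    apply h
    simp only [Finset.mem_Ico] at *
    omega
  rw [Dset_mem, Dset_mem]
  exact ⟨fun hm n hn => (hcoord n hn).symm.trans (hm n hn),
    fun hm n hn => (hcoord n hn).trans (hm n hn)⟩

lemma succSet_dep {L k : ℕ} (hL : 2 * (L/2) = L) {ε ε' : ℕ → Fin 3}
    (h : ∀ n ∈ Finset.Ico (2*L*k) (2*L*k + 2*L), ε n = ε' n) :
    ε ∈ succSet L k ↔ ε' ∈ succSet L k := by
  simp only [succSet, Set.mem_iUnion, Finset.mem_Icc, exists_prop]
  constructor <;> rintro ⟨i, hi, hd⟩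
  · exact ⟨i, hi, (Dset_dep hL hi.1 hi.2 h).1 hd⟩
  · exact ⟨i, hi, (Dset_dep hL hi.1 hi.2 h).2 hd⟩

lemma failSet_dep {L k : ℕ} (hL : 2 * (L/2) = L) {ε ε' : ℕ → Fin 3}
    (h : ∀ n ∈ Finset.Ico (2*L*k) (2*L*k + 2*L), ε n = ε' n) :
    ε ∈ failSet L k ↔ ε' ∈ failSet L k :=
  not_iff_not.2 (succSet_dep hL h)

lemma IkSet_dep {L k : ℕ} (hL : 2 * (L/2) = L) {ε ε' : ℕ → Fin 3}
    (h : ∀ n ∈ Finset.range (2*L*k), ε n = ε' n) :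
    ε ∈ IkSet L k ↔ ε' ∈ IkSet L k := by
  simp only [IkSet, Set.mem_iInter, Finset.mem_range]
  have hsub : ∀ j, j < k → ∀ n ∈ Finset.Ico (2*L*j) (2*L*j + 2*L), ε n = ε' n := by
    intro j hj n hn
    apply h
    simp only [Finset.mem_Ico] at hn
    simp only [Finset.mem_range]
    calc n < 2*L*j + 2*L := hn.2
      _ = 2*L*(j+1) := by ring
      _ ≤ 2*L*k := Nat.mul_le_mul_left _ (by omega)
  exact ⟨fun hm j hj => (failSet_dep hL (hsub j hj)).1 (hm j hj),
    fun hm j hj => (failSet_dep hL (hsub j hj)).2 (hm j hj)⟩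

lemma Ik_inter_measure
    (hiid : iIndepFun (fun i (ε : ℕ → Fin 3) => ε i) W)
    {L : ℕ} (hL : 2 * (L/2) = L) (k : ℕ) (B : Set (ℕ → Fin 3))
    (hB : ∀ ε ε' : ℕ → Fin 3, (∀ n ∈ Finset.Ico (2*L*k) (2*L*k + 2*L), ε n = ε' n) →
      (ε ∈ B ↔ ε' ∈ B)) :
    W (IkSet L k ∩ B) = W (IkSet L k) * W B := by
  apply aux_indep_of_dependsOn hiid (Finset.range (2*L*k)) (Finset.Ico (2*L*k) (2*L*k + 2*L))
  · simp only [Finset.disjoint_left, Finset.mem_range, Finset.mem_Ico]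
    omega
  · exact fun ε ε' h => IkSet_dep hL h
  · exact hB

lemma IkSet_measure
    (hiid : iIndepFun (fun i (ε : ℕ → Fin 3) => ε i) W)
    [IsProbabilityMeasure W]
    {L : ℕ} (hL : 2 * (L/2) = L) (k : ℕ) :
    W (IkSet L k) = ∏ j ∈ Finset.range k, W (failSet L j) := by
  induction k with
  | zero => simp [IkSet]
  | succ k ih =>
    have hstep : IkSet L (k+1) = IkSet L k ∩ failSet L k := by
      rw [IkSet, Finset.range_add_one, Finset.set_biInter_insert, Set.inter_comm]
      rfl
    rw [hstep, Ik_inter_measure hiid hL k _ (fun ε ε' h => failSet_dep hL h), ih,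
      Finset.prod_range_succ]

end Measures

lemma aux_rpow_le_exp {α : ℝ} (hα : 0 < α) {x : ℝ} (hx : 0 ≤ x) :
    x ^ α ≤ (2*α) ^ α * Real.exp (x/2) := by
  rcases hx.eq_or_lt with h | hxpos
  · rw [← h, Real.zero_rpow (ne_of_gt hα)]
    positivity
  · have h2α : (0:ℝ) < 2*α := by linarith
    rw [Real.rpow_def_of_pos hxpos, Real.rpow_def_of_pos h2α, ← Real.exp_add]
    apply Real.exp_le_exp.2
    have hlog : Real.log (x / (2*α)) ≤ x / (2*α) - 1 :=
      Real.log_le_sub_one_of_pos (by positivity)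
    have hlogeq : Real.log x = Real.log (2*α) + Real.log (x / (2*α)) := by
      rw [Real.log_div (ne_of_gt hxpos) (ne_of_gt h2α)]; ring
    have : α * Real.log (x / (2*α)) ≤ x / 2 := by
      calc α * Real.log (x / (2*α)) ≤ α * (x / (2*α) - 1) := by
            exact mul_le_mul_of_nonneg_left hlog (le_of_lt hα)
        _ = x / 2 - α := by field_simp
        _ ≤ x / 2 := by linarith
    nlinarith [this, hlogeq]

lemma aux_exp_mul_le {ρ : ℝ} (h0 : 0 ≤ ρ) (h1 : ρ ≤ 1) :
    Real.exp (ρ/2) * (1 - ρ) ≤ 1 - ρ/2 := by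
  have h2 : 1 - ρ/2 ≤ Real.exp (-(ρ/2)) := by
    have := Real.add_one_le_exp (-(ρ/2)); linarith
  have h3 : Real.exp (ρ/2) * Real.exp (-(ρ/2)) = 1 := by
    rw [← Real.exp_add]; simp
  have h4 : (1:ℝ) ≤ Real.exp (ρ/2) := Real.one_le_exp (by linarith)
  nlinarith [Real.exp_pos (ρ/2)]

/-- for every real `α > 1` there is a finite constant `M(α)` bounding
`E_W[(r^L · τ₁^{(L)})^α]` uniformly over all (positive) even `L`. -/
theorem moment_bound_regeneration_time
    (p : ℝ) (hp : 1 / 2 < p) (hp1 : p < 1)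
    (r : ℝ) (hr : r = (1 - p) / 2)
    (w : Measure (Fin 3)) (hwprob : IsProbabilityMeasure w)
    (hw0 : w {0} = ENNReal.ofReal r) (hw1 : w {1} = ENNReal.ofReal r)
    (hw2 : w {2} = ENNReal.ofReal p)
    (W : Measure (ℕ → Fin 3)) (hWprob : IsProbabilityMeasure W)
    (hiid : iIndepFun (fun i (ε : ℕ → Fin 3) => ε i) W)
    (hmarg : ∀ i : ℕ, W.map (fun ε => ε i) = w)
    (α : ℝ) (hα : 1 < α) :
    ∃ M : ℝ, ∀ L : ℕ, Even L → 0 < L →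
      ∫⁻ ε, (ENNReal.ofReal (r ^ L * (tau1 L ε : ℝ))) ^ α ∂W ≤ ENNReal.ofReal M := by
  classical
  have hα0 : (0:ℝ) < α := by linarith
  refine ⟨2 * (8 ^ α * (2*α) ^ α * Real.exp (1/2)), ?_⟩
  intro L hLeven hLpos
  set K : ℝ := 8 ^ α * (2*α) ^ α * Real.exp (1/2) with hK
  have hKpos : 0 < K := by positivity
  have hr0 : 0 < r := by rw [hr]; linarith
  have hr1 : r < 1 := by rw [hr]; linarith
  have hL : 2 * (L/2) = L := by
    obtain ⟨m, hm⟩ := hLeven; omega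
  have hL2 : 1 ≤ L / 2 := by omega
  set ρ : ℝ := (L/2 : ℕ) * (p * r ^ L) with hρ
  have hLpos' : (0:ℝ) < (L/2 : ℕ) := by exact_mod_cast Nat.pos_of_ne_zero (by omega)
  have hρpos : 0 < ρ := by
    apply mul_pos hLpos'
    have : (0:ℝ) < r ^ L := pow_pos hr0 L
    nlinarith
  have hWsucc : ∀ k, W (succSet L k) = ENNReal.ofReal ρ := by
    intro k
    rw [succSet_measure hiid hmarg hw0 hw1 hw2 hL k, hρ,
      ENNReal.ofReal_mul (by positivity), ENNReal.ofReal_natCast,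
      ENNReal.ofReal_mul (by linarith), ENNReal.ofReal_pow hr0.le]
  have hρ1 : ρ ≤ 1 := by
    have h := prob_le_one (μ := W) (s := succSet L 0)
    rw [hWsucc 0] at h
    exact ENNReal.ofReal_le_one.1 h
  have h1ρ : (0:ℝ) ≤ 1 - ρ := by linarith
  have hWfail : ∀ k, W (failSet L k) = ENNReal.ofReal (1 - ρ) := by
    intro k
    rw [failSet, prob_compl_eq_one_sub (succSet_measurable L k), hWsucc,
      ← ENNReal.ofReal_one, ← ENNReal.ofReal_sub _ hρpos.le]
  have hWIk : ∀ k, W (IkSet L k) = ENNReal.ofReal (1-ρ) ^ k := by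
    intro k
    rw [IkSet_measure hiid hL k, Finset.prod_congr rfl (fun j _ => hWfail j),
      Finset.prod_const, Finset.card_range]
  have hWEk : ∀ k, W (IkSet L k ∩ succSet L k)
      = ENNReal.ofReal (1-ρ)^k * ENNReal.ofReal ρ := by
    intro k
    rw [Ik_inter_measure hiid hL k _ (fun ε ε' h => succSet_dep hL h), hWIk, hWsucc]
  have hNmeas : MeasurableSet (⋂ k, failSet L k) :=
    MeasurableSet.iInter (fun k => failSet_measurable L k)
  have hNzero : W (⋂ k, failSet L k) = 0 := by
    have hle : ∀ k : ℕ, W (⋂ k, failSet L k) ≤ ENNReal.ofReal (1-ρ) ^ k := by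
      intro k
      refine (measure_mono ?_).trans_eq (hWIk k)
      intro ε hε
      simp only [Set.mem_iInter] at hε
      simp only [IkSet, Set.mem_iInter]
      exact fun j _ => hε j
    have hlt1 : ENNReal.ofReal (1-ρ) < 1 := ENNReal.ofReal_lt_one.2 (by linarith)
    exact le_antisymm
      (ge_of_tendsto' (ENNReal.tendsto_pow_atTop_nhds_zero_of_lt_one hlt1) hle) (zero_le)
  set c : ℕ → ℝ≥0∞ := fun k => ENNReal.ofReal ((8 * (ρ * (k+1)))^α) with hc
  set g : (ℕ → Fin 3) → ℝ≥0∞ := fun ε =>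
    (∑' k, Set.indicator (IkSet L k ∩ succSet L k) (fun _ => c k) ε)
      + Set.indicator (⋂ k, failSet L k) (fun _ => (⊤:ℝ≥0∞)) ε with hg
  have hpoint : ∀ ε, (ENNReal.ofReal (r^L * (tau1 L ε : ℝ)))^α ≤ g ε := by
    intro ε
    by_cases hN : ∀ k, ε ∈ failSet L k
    · have hmem : Set.indicator (⋂ k, failSet L k) (fun _ => (⊤:ℝ≥0∞)) ε = ⊤ :=
        Set.indicator_of_mem (Set.mem_iInter.2 hN) _
      have : g ε = ⊤ := by rw [hg]; simp [hmem]
      rw [this]; exact le_top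
    · push_neg at hN
      obtain ⟨k1, hk1⟩ := hN
      have hk1' : ε ∈ succSet L k1 := not_not.1 hk1
      set k₀ := sInf {k | ε ∈ succSet L k} with hk₀def
      have hk₀ : k₀ ∈ {k | ε ∈ succSet L k} := Nat.sInf_mem ⟨k1, hk1'⟩
      rw [Set.mem_setOf_eq] at hk₀
      have hmin : ∀ j, j < k₀ → ε ∈ failSet L j := fun j hj =>
        Nat.notMem_of_lt_sInf hj
      have hEk : ε ∈ IkSet L k₀ ∩ succSet L k₀ := by
        refine ⟨?_, hk₀⟩
        simp only [IkSet, Set.mem_iInter, Finset.mem_range]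
        exact fun j hj => hmin j hj
      have htau := tau1_le_of_succ hL hLpos hk₀
      have hle1 : r^L * (tau1 L ε : ℝ) ≤ 8 * (ρ * (k₀+1)) := by
        have h1 : (tau1 L ε : ℝ) ≤ ((2*L*(k₀+1) : ℕ) : ℝ) := Nat.cast_le.2 htau
        push_cast at h1
        have hrL : (0:ℝ) < r ^ L := pow_pos hr0 L
        have h2 : r^L * (tau1 L ε : ℝ) ≤ r^L * (2*L*(k₀+1)) :=
          mul_le_mul_of_nonneg_left h1 hrL.le
        refine h2.trans ?_
        rw [hρ]
        have hcast : ((L/2 : ℕ) : ℝ) * 2 = (L : ℝ) := by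
          exact_mod_cast (by omega : L/2*2 = L)
        have key : r^L * (2*(L:ℝ)*((k₀:ℝ)+1))
            = 4 * ((L/2 : ℕ) : ℝ) * r^L * ((k₀:ℝ)+1) := by
          rw [← hcast]; ring
        have key2 : 8 * (((L/2 : ℕ) : ℝ) * (p * r^L) * ((k₀:ℝ)+1))
            = (4 * ((L/2 : ℕ) : ℝ) * r^L * ((k₀:ℝ)+1)) * (2*p) := by ring
        rw [key, key2]
        have hx : (0:ℝ) ≤ 4 * ((L/2 : ℕ) : ℝ) * r^L * ((k₀:ℝ)+1) := by positivity
        exact le_mul_of_one_le_right hx (by linarith)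
      have hbound : (ENNReal.ofReal (r^L * (tau1 L ε : ℝ)))^α ≤ c k₀ := by
        rw [hc]
        calc (ENNReal.ofReal (r^L * (tau1 L ε:ℝ)))^α
            ≤ (ENNReal.ofReal (8 * (ρ * (k₀+1))))^α :=
              ENNReal.rpow_le_rpow (ENNReal.ofReal_le_ofReal hle1) hα0.le
          _ = ENNReal.ofReal ((8 * (ρ * (k₀+1)))^α) :=
              ENNReal.ofReal_rpow_of_pos (by positivity)
      calc (ENNReal.ofReal (r^L * (tau1 L ε : ℝ)))^α ≤ c k₀ := hbound
        _ ≤ ∑' k, Set.indicator (IkSet L k ∩ succSet L k) (fun _ => c k) ε := by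
            rw [← Set.indicator_of_mem hEk (fun _ => c k₀)]
            exact ENNReal.le_tsum k₀
        _ ≤ g ε := le_self_add
  have hEkmeas : ∀ k, MeasurableSet (IkSet L k ∩ succSet L k) :=
    fun k => (IkSet_measurable L k).inter (succSet_measurable L k)
  have hint : ∫⁻ ε, (ENNReal.ofReal (r^L * (tau1 L ε : ℝ)))^α ∂W
      ≤ ∑' k, c k * W (IkSet L k ∩ succSet L k) := by
    calc ∫⁻ ε, (ENNReal.ofReal (r^L * (tau1 L ε : ℝ)))^α ∂W
        ≤ ∫⁻ ε, g ε ∂W := lintegral_mono hpoint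
      _ = (∫⁻ ε, ∑' k, Set.indicator (IkSet L k ∩ succSet L k) (fun _ => c k) ε ∂W)
          + ∫⁻ ε, Set.indicator (⋂ k, failSet L k) (fun _ => (⊤:ℝ≥0∞)) ε ∂W := by
          rw [hg]
          exact lintegral_add_left
            (Measurable.ennreal_tsum fun k => measurable_const.indicator (hEkmeas k)) _
      _ = (∑' k, c k * W (IkSet L k ∩ succSet L k)) + ⊤ * W (⋂ k, failSet L k) := by
          rw [lintegral_tsum (fun k => (measurable_const.indicator (hEkmeas k)).aemeasurable),
            lintegral_indicator_const hNmeas]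
          congr 1
          exact tsum_congr (fun k => lintegral_indicator_const (hEkmeas k) _)
      _ = ∑' k, c k * W (IkSet L k ∩ succSet L k) := by rw [hNzero, mul_zero, add_zero]
  refine hint.trans ?_
  have hterm : ∀ k : ℕ, c k * W (IkSet L k ∩ succSet L k)
      ≤ ENNReal.ofReal (K * ρ * (1 - ρ/2)^k) := by
    intro k
    rw [hWEk k, hc]
    rw [← ENNReal.ofReal_pow h1ρ, ← ENNReal.ofReal_mul (by positivity),
      ← ENNReal.ofReal_mul (by positivity)]
    apply ENNReal.ofReal_le_ofReal
    have e1 : (8*(ρ*((k:ℝ)+1)))^α = 8^α * (ρ*((k:ℝ)+1))^α :=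
      Real.mul_rpow (by norm_num) (by positivity)
    have e2 : (ρ*((k:ℝ)+1))^α ≤ (2*α)^α * Real.exp ((ρ*((k:ℝ)+1))/2) :=
      aux_rpow_le_exp hα0 (by positivity)
    have e3 : Real.exp ((ρ*((k:ℝ)+1))/2) = Real.exp (ρ/2) * Real.exp (ρ/2)^k := by
      rw [show (ρ*((k:ℝ)+1))/2 = ((k+1 : ℕ) : ℝ) * (ρ/2) by push_cast; ring,
        Real.exp_nat_mul, pow_succ']
    have e4 : (Real.exp (ρ/2) * (1-ρ))^k ≤ (1-ρ/2)^k :=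
      pow_le_pow_left₀ (mul_nonneg (Real.exp_pos _).le h1ρ)
        (aux_exp_mul_le hρpos.le hρ1) k
    have e5 : Real.exp (ρ/2) ≤ Real.exp (1/2) := Real.exp_le_exp.2 (by linarith)
    calc (8*(ρ*((k:ℝ)+1)))^α * ((1-ρ)^k * ρ)
        = 8^α * ((ρ*((k:ℝ)+1))^α) * (1-ρ)^k * ρ := by rw [e1]; ring
      _ ≤ 8^α * ((2*α)^α * (Real.exp (ρ/2) * Real.exp (ρ/2)^k)) * (1-ρ)^k * ρ := by
          apply mul_le_mul_of_nonneg_right (mul_le_mul_of_nonneg_right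
            (mul_le_mul_of_nonneg_left ?_ (by positivity)) (by positivity)) hρpos.le
          rw [← e3]; exact e2
      _ = 8^α * (2*α)^α * Real.exp (ρ/2) * ((Real.exp (ρ/2) * (1-ρ))^k) * ρ := by
          rw [mul_pow]; ring
      _ ≤ 8^α * (2*α)^α * Real.exp (1/2) * ((1-ρ/2)^k) * ρ := by
          apply mul_le_mul_of_nonneg_right ?_ hρpos.le
          apply mul_le_mul (mul_le_mul_of_nonneg_left e5 (by positivity)) e4
            (by positivity) (by positivity)
      _ = K * ρ * (1-ρ/2)^k := by rw [hK]; ring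
  refine (ENNReal.tsum_le_tsum hterm).trans ?_
  have h12 : (0:ℝ) ≤ 1 - ρ/2 := by linarith
  have hsum : ∑' k : ℕ, ENNReal.ofReal (K * ρ * (1-ρ/2)^k)
      = ENNReal.ofReal (K*ρ) * (1 - ENNReal.ofReal (1-ρ/2))⁻¹ := by
    simp_rw [ENNReal.ofReal_mul (by positivity : (0:ℝ) ≤ K*ρ), ENNReal.ofReal_pow h12]
    rw [ENNReal.tsum_mul_left, ENNReal.tsum_geometric]
  rw [hsum]
  have hone : (1:ℝ≥0∞) - ENNReal.ofReal (1-ρ/2) = ENNReal.ofReal (ρ/2) := by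
    rw [← ENNReal.ofReal_one, ← ENNReal.ofReal_sub _ h12]
    norm_num
  rw [hone]
  have hKρ : ENNReal.ofReal (K*ρ) = ENNReal.ofReal (2*K) * ENNReal.ofReal (ρ/2) := by
    rw [← ENNReal.ofReal_mul (by positivity)]
    congr 1
    ring
  rw [hKρ, mul_assoc, ENNReal.mul_inv_cancel
    (ENNReal.ofReal_pos.2 (by linarith)).ne' ENNReal.ofReal_ne_top, mul_one]
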